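/- Let S be a Γ-hemiring possessing a left unity Σᵢ[eᵢ,δᵢ] ∈ L and a right unity Σⱼ[γⱼ,fⱼ] ∈ R. Then for every fuzzy h-ideal σ of S with σ(0)=1 one has (σ⁺′)⁺ = σ, and for every fuzzy h-ideal μ of L with μ(0_L)=1 one has (μ⁺)⁺′ = μ. -/

import Mathlib

open scoped Classical

/-- A `Γ`-hemiring structure on additive commutative monoids `S` and `Γ`. -/
structure GammaHemiring (S : Type) (Γ : Type) [AddCommMonoid S] [AddCommMonoid Γ] : Type where
  tri : S → Γ → S → S
  add_left : ∀ a b α c, tri (a + b) α c = tri a α c + tri b α c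
  add_mid : ∀ a α β b, tri a (α + β) b = tri a α b + tri a β b
  add_right : ∀ a α b c, tri a α (b + c) = tri a α b + tri a α c
  tri_assoc : ∀ a α b β c, tri a α (tri b β c) = tri (tri a α b) β c
  zero_left : ∀ α a, tri 0 α a = 0
  zero_right : ∀ a α, tri a α 0 = 0
  zero_mid : ∀ a b, tri a 0 b = 0

namespace GammaHemiring

variable {S Γ : Type} [AddCommMonoid S] [AddCommMonoid Γ] (H : GammaHemiring S Γ)

/-- Action of a formal sum `Σ (xᵢ, αᵢ)` on an element of `S`. -/
def lAct (u : Multiset (S × Γ)) (a : S) : S := (u.map fun p => H.tri p.1 p.2 a).sum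

/-- The congruence `ρ` on the free additive commutative semigroup on `S × Γ`. -/
def lSetoid : Setoid (Multiset (S × Γ)) where
  r u v := ∀ a, H.lAct u a = H.lAct v a
  iseqv := ⟨fun _ _ => rfl, fun h a => (h a).symm, fun h1 h2 a => (h1 a).trans (h2 a)⟩

/-- The left operator hemiring `L` of a `Γ`-hemiring `S`. -/
def LOp := Quotient H.lSetoid

/-- Multiplication of formal sums: `(Σ[xᵢ,αᵢ])(Σ[yⱼ,βⱼ]) = Σ[xᵢαᵢyⱼ, βⱼ]`. -/
def lMul (u v : Multiset (S × Γ)) : Multiset (S × Γ) :=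
  u.bind fun p => v.map fun q => (H.tri p.1 p.2 q.1, q.2)

lemma lAct_add (u v : Multiset (S × Γ)) (a : S) :
    H.lAct (u + v) a = H.lAct u a + H.lAct v a := by
  simp [lAct]

lemma tri_sum (x : S) (α : Γ) (m : Multiset S) :
    H.tri x α m.sum = (m.map (H.tri x α)).sum := by
  induction m using Multiset.induction_on with
  | empty => simp [H.zero_right]
  | cons b m ih => simp [H.add_right, ih]

lemma lAct_arg_add (u : Multiset (S × Γ)) (b c : S) :
    H.lAct u (b + c) = H.lAct u b + H.lAct u c := by
  simp only [lAct, H.add_right]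
  rw [← Multiset.sum_map_add]

lemma lAct_arg_zero (u : Multiset (S × Γ)) : H.lAct u 0 = 0 := by
  simp [lAct, H.zero_right]

lemma lAct_zero (a : S) : H.lAct 0 a = 0 := by simp [lAct]

lemma lAct_mul (u v : Multiset (S × Γ)) (a : S) :
    H.lAct (H.lMul u v) a = H.lAct u (H.lAct v a) := by
  unfold lAct lMul
  rw [Multiset.map_bind, Multiset.sum_bind]
  congr 1
  refine Multiset.map_congr rfl ?_
  intro p _
  rw [tri_sum, Multiset.map_map, Multiset.map_map]
  congr 1
  refine Multiset.map_congr rfl ?_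
  intro q _
  simp [Function.comp, H.tri_assoc]

noncomputable instance : Add H.LOp :=
  ⟨Quotient.map₂ (· + ·) (fun {u u'} hu {v v'} hv a => by
    rw [lAct_add, lAct_add, hu a, hv a])⟩

noncomputable instance : Zero H.LOp := ⟨Quotient.mk H.lSetoid 0⟩

noncomputable instance : Mul H.LOp :=
  ⟨Quotient.map₂ H.lMul (fun {u u'} hu {v v'} hv a => by
    rw [lAct_mul, lAct_mul, hv a, hu (H.lAct v' a)])⟩

/-- The left operator hemiring structure. -/
noncomputable instance : NonUnitalSemiring H.LOp where
  add := (· + ·)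
  zero := 0
  mul := (· * ·)
  nsmul := nsmulRec
  nsmul_zero := fun _ => rfl
  nsmul_succ := fun _ _ => rfl
  add_assoc a b c := Quotient.inductionOn₃ a b c fun u v w =>
    congrArg (Quotient.mk _) (add_assoc u v w)
  zero_add a := Quotient.inductionOn a fun u => congrArg (Quotient.mk _) (zero_add u)
  add_zero a := Quotient.inductionOn a fun u => congrArg (Quotient.mk _) (add_zero u)
  add_comm a b := Quotient.inductionOn₂ a b fun u v => congrArg (Quotient.mk _) (add_comm u v)
  left_distrib a b c := Quotient.inductionOn₃ a b c fun u v w => Quotient.sound fun s => by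
    simp [lAct_mul, lAct_add, lAct_arg_add]
  right_distrib a b c := Quotient.inductionOn₃ a b c fun u v w => Quotient.sound fun s => by
    simp [lAct_mul, lAct_add]
  zero_mul a := Quotient.inductionOn a fun u => Quotient.sound fun s => by
    simp [lAct_mul, lAct_zero]
  mul_zero a := Quotient.inductionOn a fun u => Quotient.sound fun s => by
    simp [lAct_mul, lAct_zero, lAct_arg_zero]
  mul_assoc a b c := Quotient.inductionOn₃ a b c fun u v w => Quotient.sound fun s => by
    simp [lAct_mul]

/-- The class of a formal sum in `L`. -/
def lMk (u : Multiset (S × Γ)) : H.LOp := Quotient.mk H.lSetoid u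

lemma mk_add (u v : Multiset (S × Γ)) : H.lMk u + H.lMk v = H.lMk (u + v) := rfl

lemma mk_mul (u v : Multiset (S × Γ)) : H.lMk u * H.lMk v = H.lMk (H.lMul u v) := rfl

/-- Action of an element of `L` on `S`. -/
def lActQ : H.LOp → S → S := Quotient.lift H.lAct (fun _ _ h => funext h)

end GammaHemiring
instance : Fact ((0:ℝ) ≤ 1) := ⟨zero_le_one⟩

/-- Characteristic function of a subset, valued in the unit interval. -/
noncomputable def fuzzyChar {X : Type} (A : Set X) (x : X) : unitInterval :=
  if x ∈ A then 1 else 0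

/-- A fuzzy h-ideal of a hemiring. -/
def IsFuzzyHIdeal {T : Type} [NonUnitalSemiring T] (μ : T → unitInterval) : Prop :=
  (∀ x y, μ x ⊓ μ y ≤ μ (x + y)) ∧
  (∀ x y, μ x ⊔ μ y ≤ μ (x * y)) ∧
  (∀ x a b z, x + a + z = b + z → μ a ⊓ μ b ≤ μ x)

namespace GammaHemiring

variable {S Γ : Type} [AddCommMonoid S] [AddCommMonoid Γ] (H : GammaHemiring S Γ)

/-- A fuzzy h-ideal of a `Γ`-hemiring. -/
def IsGFuzzyHIdeal (μ : S → unitInterval) : Prop :=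
  (∀ x y, μ x ⊓ μ y ≤ μ (x + y)) ∧
  (∀ x γ y, μ x ⊔ μ y ≤ μ (H.tri x γ y)) ∧
  (∀ x a b z, x + a + z = b + z → μ a ⊓ μ b ≤ μ x)

/-- For a fuzzy subset `μ` of `L`, the fuzzy subset `μ⁺` of `S`, `μ⁺(x) = inf_γ μ([x,γ])`. -/
noncomputable def plusMap (μ : H.LOp → unitInterval) (x : S) : unitInterval :=
  ⨅ γ : Γ, μ (H.lMk {(x, γ)})

/-- For a fuzzy subset `σ` of `S`, the fuzzy subset `σ⁺′` of `L`,
`σ⁺′(Σᵢ[xᵢ,αᵢ]) = inf_s σ(Σᵢ xᵢαᵢs)`. -/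
noncomputable def plusPrime (σ : S → unitInterval) : H.LOp → unitInterval :=
  Quotient.lift (fun u => ⨅ s : S, σ (H.lAct u s))
    (fun u v h => iInf_congr fun s => by rw [h s])

/-- A left unity of `S`: an element `Σᵢ[eᵢ,δᵢ]` of `L` acting as the identity. -/
def IsLeftUnity (E : Multiset (S × Γ)) : Prop := ∀ a : S, H.lAct E a = a

/-- A right unity of `S`: a formal sum `Σⱼ[γⱼ,fⱼ]` with `Σⱼ a γⱼ fⱼ = a` for all `a`. -/
def IsRightUnity (E : Multiset (Γ × S)) : Prop :=
  ∀ a : S, ((E.map fun p => H.tri a p.1 p.2).sum) = a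

lemma tri_sum_left (m : Multiset S) (γ : Γ) (a : S) :
    H.tri m.sum γ a = (m.map fun x => H.tri x γ a).sum := by
  induction m using Multiset.induction_on with
  | empty => simp [H.zero_left]
  | cons b m ih => simp [H.add_left, ih]

lemma lAct_arg_sum (u : Multiset (S × Γ)) (m : Multiset S) :
    H.lAct u m.sum = (m.map (H.lAct u)).sum := by
  induction m using Multiset.induction_on with
  | empty => simp [lAct_arg_zero]
  | cons b m ih => simp [H.lAct_arg_add, ih]

lemma lAct_singleton (x : S) (γ : Γ) (a : S) :
    H.lAct {(x, γ)} a = H.tri x γ a := by simp [lAct]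

lemma tri_lAct (u : Multiset (S × Γ)) (s : S) (γ : Γ) (a : S) :
    H.tri (H.lAct u s) γ a = H.lAct u (H.tri s γ a) := by
  unfold lAct
  rw [tri_sum_left, Multiset.map_map]
  exact congrArg Multiset.sum
    (Multiset.map_congr rfl fun p _ => (H.tri_assoc p.1 p.2 s γ a).symm)

lemma mk_single_act (u : Multiset (S × Γ)) (s : S) (γ : Γ) :
    H.lMk {(H.lAct u s, γ)} = H.lMk u * H.lMk {(s, γ)} := by
  rw [mk_mul]
  refine Quotient.sound fun a => ?_
  rw [lAct_singleton, tri_lAct, lAct_mul, lAct_singleton]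

lemma mk_eq_map_unity (u : Multiset (S × Γ)) (E : Multiset (S × Γ)) (hE : H.IsLeftUnity E) :
    H.lMk u = H.lMk (E.map fun q => (H.lAct u q.1, q.2)) := by
  refine Quotient.sound fun a => ?_
  show H.lAct u a = H.lAct (E.map fun q => (H.lAct u q.1, q.2)) a
  calc H.lAct u a = H.lAct u (H.lAct E a) := by rw [hE a]
    _ = H.lAct u ((E.map fun q => H.tri q.1 q.2 a).sum) := rfl
    _ = ((E.map fun q => H.tri q.1 q.2 a).map (H.lAct u)).sum := H.lAct_arg_sum _ _
    _ = (E.map fun q => H.lAct u (H.tri q.1 q.2 a)).sum := by rw [Multiset.map_map]; rfl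
    _ = (E.map fun q => H.tri (H.lAct u q.1) q.2 a).sum :=
        congrArg Multiset.sum (Multiset.map_congr rfl fun q _ => (H.tri_lAct u q.1 q.2 a).symm)
    _ = H.lAct (E.map fun q => (H.lAct u q.1, q.2)) a := by
        show _ = ((E.map fun q => (H.lAct u q.1, q.2)).map fun p => H.tri p.1 p.2 a).sum
        rw [Multiset.map_map]
        rfl

end GammaHemiring

lemma le_mu_sum {T : Type} [AddCommMonoid T] (μ : T → unitInterval)
    (hadd : ∀ x y, μ x ⊓ μ y ≤ μ (x + y)) (h0 : μ 0 = 1) {t : unitInterval}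
    (m : Multiset T) (h : ∀ a ∈ m, t ≤ μ a) : t ≤ μ m.sum := by
  induction m using Multiset.induction_on with
  | empty => rw [Multiset.sum_zero, h0]; exact unitInterval.le_one t
  | cons b m ih =>
      have := hadd b m.sum
      refine le_trans (le_inf (h b (Multiset.mem_cons_self b m))
        (ih fun a ha => h a (Multiset.mem_cons_of_mem ha))) ?_
      simpa using this

lemma le_mu_lmk {S Γ : Type} [AddCommMonoid S] [AddCommMonoid Γ] (H : GammaHemiring S Γ)
    (μ : H.LOp → unitInterval)
    (hadd : ∀ x y, μ x ⊓ μ y ≤ μ (x + y)) (h0 : μ 0 = 1) {t : unitInterval}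
    (w : Multiset (S × Γ)) (h : ∀ p ∈ w, t ≤ μ (H.lMk {p})) : t ≤ μ (H.lMk w) := by
  induction w using Multiset.induction_on with
  | empty =>
      have : H.lMk 0 = (0 : H.LOp) := rfl
      rw [this, h0]; exact unitInterval.le_one t
  | cons p w ih =>
      have hw : H.lMk (p ::ₘ w) = H.lMk {p} + H.lMk w := by
        rw [GammaHemiring.mk_add, Multiset.singleton_add]
      rw [hw]
      exact le_trans (le_inf (h p (Multiset.mem_cons_self p w))
        (ih fun q hq => h q (Multiset.mem_cons_of_mem hq))) (hadd _ _)

/-- if `S` has a left unity and a right unity, then `(σ⁺′)⁺ = σ` for every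
fuzzy h-ideal `σ` of `S` with `σ(0)=1`, and `(μ⁺)⁺′ = μ` for every fuzzy h-ideal `μ` of `L`
with `μ(0_L)=1`. -/
theorem plusPrime_plusMap_inverse {S Γ : Type} [AddCommMonoid S] [AddCommMonoid Γ]
    (H : GammaHemiring S Γ)
    (E : Multiset (S × Γ)) (hE : H.IsLeftUnity E)
    (E' : Multiset (Γ × S)) (hE' : H.IsRightUnity E') :
    (∀ σ : S → unitInterval, H.IsGFuzzyHIdeal σ → σ 0 = 1 →
      H.plusMap (H.plusPrime σ) = σ) ∧
    (∀ μ : H.LOp → unitInterval, IsFuzzyHIdeal μ → μ 0 = 1 →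
      H.plusPrime (H.plusMap μ) = μ) := by
  constructor
  · intro σ hσ h0
    funext x
    apply le_antisymm
    · conv_rhs => rw [← hE' x]
      refine le_mu_sum σ hσ.1 h0 _ ?_
      intro a ha
      obtain ⟨p, hp, rfl⟩ := Multiset.mem_map.1 ha
      have h1 : H.plusMap (H.plusPrime σ) x ≤ H.plusPrime σ (H.lMk {(x, p.1)}) :=
        iInf_le _ p.1
      have h2 : H.plusPrime σ (H.lMk {(x, p.1)}) ≤ σ (H.lAct {(x, p.1)} p.2) :=
        iInf_le _ p.2
      refine le_trans h1 (le_trans h2 ?_)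
      rw [H.lAct_singleton]
    · refine le_iInf fun γ => ?_
      show σ x ≤ ⨅ s : S, σ (H.lAct {(x, γ)} s)
      refine le_iInf fun s => ?_
      rw [H.lAct_singleton]
      exact le_trans le_sup_left (hσ.2.1 x γ s)
  · intro μ hμ h0
    funext L
    induction L using Quotient.inductionOn with
    | h u =>
      have key : H.plusPrime (H.plusMap μ) (H.lMk u)
          = ⨅ s : S, ⨅ γ : Γ, μ (H.lMk {(H.lAct u s, γ)}) := rfl
      show H.plusPrime (H.plusMap μ) (H.lMk u) = μ (H.lMk u)
      rw [key]
      apply le_antisymm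
      · rw [H.mk_eq_map_unity u E hE]
        refine le_mu_lmk H μ hμ.1 h0 _ ?_
        intro p hp
        obtain ⟨q, hq, rfl⟩ := Multiset.mem_map.1 hp
        exact le_trans (iInf_le _ q.1) (iInf_le _ q.2)
      · refine le_iInf fun s => le_iInf fun γ => ?_
        rw [H.mk_single_act]
        exact le_trans le_sup_left (hμ.2.1 _ _)
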